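/- Let f : I ⊆ ℝ → ℝ be differentiable on I, a, b ∈ I with a < b, let p > 1, and suppose |f'|^{p/(p-1)} is quasi-convex on [a,b]. Then |(f(a)+f(b))/2 − (1/(b-a))∫_a^b f(u) du| ≤ (b-a)/(2(p+1)^{1/p}) · (max{|f'(a)|^{p/(p-1)}, |f'(b)|^{p/(p-1)}})^{(p-1)/p}. -/

import Mathlib

open Real Set MeasureTheory intervalIntegral

noncomputable def beta (x y : ℝ) : ℝ := ∫ t in (0:ℝ)..1, t ^ (x-1) * (1-t) ^ (y-1)

def QuasiConvexOn' (s : Set ℝ) (g : ℝ → ℝ) : Prop :=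
  ∀ x ∈ s, ∀ y ∈ s, ∀ lam ∈ Set.Icc (0:ℝ) 1, g (lam*x + (1-lam)*y) ≤ max (g x) (g y)

theorem stmt19 (I : Set ℝ) (hI : Set.OrdConnected I)
    (f f' : ℝ → ℝ) (a b : ℝ) (ha : a ∈ I) (hb : b ∈ I) (hab : a < b)
    (p : ℝ) (hp : 1 < p)
    (hderiv : ∀ x ∈ I, HasDerivAt f (f' x) x)
    (hqc : QuasiConvexOn' (Set.Icc a b) (fun x => |f' x| ^ (p/(p-1)))) :
    |(f a + f b)/2 - (1/(b-a)) * ∫ u in a..b, f u|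
      ≤ (b-a)/(2*(p+1)^(1/p)) * (max (|f' a| ^ (p/(p-1))) (|f' b| ^ (p/(p-1)))) ^ ((p-1)/p) := by
  have hsub : Set.Icc a b ⊆ I := hI.out ha hb
  have hp0 : (0:ℝ) < p := lt_trans one_pos hp
  have hp1 : (0:ℝ) < p - 1 := by linarith
  have hba : (0:ℝ) < b - a := by linarith
  set q := p/(p-1) with hq
  set M := max (|f' a| ^ q) (|f' b| ^ q) with hM
  have hM0 : 0 ≤ M := le_trans (Real.rpow_nonneg (abs_nonneg _) q) (le_max_left _ _)
  set C := M ^ ((p-1)/p) with hC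
  have hC0 : 0 ≤ C := Real.rpow_nonneg hM0 _
  set m := (a+b)/2 with hm
  -- pointwise bound on |f'|
  have hbound : ∀ u ∈ Set.Icc a b, |f' u| ≤ C := by
    intro u hu
    set lam := (b - u)/(b-a) with hlam
    have hlam01 : lam ∈ Set.Icc (0:ℝ) 1 := by
      constructor
      · exact div_nonneg (by linarith [hu.2]) hba.le
      · rw [div_le_one hba]; linarith [hu.1]
    have key := hqc a (Set.left_mem_Icc.2 hab.le) b (Set.right_mem_Icc.2 hab.le) lam hlam01
    simp only at key
    have hrep : lam*a + (1-lam)*b = u := by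
      field_simp [hlam]
      have h3 : lam * (b - a) = b - u := by rw [hlam]; exact div_mul_cancel₀ _ hba.ne'
      linear_combination -h3
    rw [hrep] at key
    have h1 : (|f' u| ^ q) ^ ((p-1)/p) ≤ C :=
      Real.rpow_le_rpow (Real.rpow_nonneg (abs_nonneg _) q) key (by positivity)
    have h2 : (|f' u| ^ q) ^ ((p-1)/p) = |f' u| := by
      rw [← Real.rpow_mul (abs_nonneg _)]
      have : q * ((p-1)/p) = 1 := by
        rw [hq]; field_simp
      rw [this, Real.rpow_one]
    rw [h2] at h1
    exact h1
  -- integrability of f'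
  have hmeas : AEStronglyMeasurable f' (volume.restrict (Set.Ioc a b)) := by
    have h1 : AEStronglyMeasurable (deriv f) (volume.restrict (Set.Ioc a b)) :=
      (measurable_deriv f).aestronglyMeasurable.restrict
    apply h1.congr
    filter_upwards [ae_restrict_mem measurableSet_Ioc] with x hx
    exact (hderiv x (hsub (Set.Ioc_subset_Icc_self hx))).deriv
  have hint : IntervalIntegrable f' volume a b := by
    rw [intervalIntegrable_iff_integrableOn_Ioc_of_le hab.le]
    apply Integrable.mono' (integrable_const C) hmeas
    filter_upwards [ae_restrict_mem measurableSet_Ioc] with x hx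
    simpa using hbound x (Set.Ioc_subset_Icc_self hx)
  have hcont : ContinuousOn (fun x : ℝ => x - m) (Set.uIcc a b) :=
    (continuous_id.sub continuous_const).continuousOn
  have hint2 : IntervalIntegrable (fun x => (x - m) * f' x) volume a b :=
    hint.continuousOn_mul hcont
  have hone : IntervalIntegrable (fun _ : ℝ => (1:ℝ)) volume a b := intervalIntegrable_const
  -- integration by parts
  have hibp : ∫ x in a..b, (x - m) * f' x
      = (b - m) * f b - (a - m) * f a - ∫ x in a..b, 1 * f x :=
    integral_mul_deriv_eq_deriv_mul
      (fun x _ => (hasDerivAt_id x).sub_const m)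
      (fun x hx => hderiv x (hsub (by rwa [Set.uIcc_of_le hab.le] at hx)))
      hone hint
  have hEq : (f a + f b)/2 - (1/(b-a)) * ∫ u in a..b, f u
      = (1/(b-a)) * ∫ x in a..b, (x - m) * f' x := by
    rw [hibp]
    simp only [one_mul]
    rw [hm]
    field_simp
    ring
  -- bound the integral
  have hintabsC : IntervalIntegrable (fun x => |x - m| * C) volume a b :=
    (((continuous_id.sub continuous_const).abs.mul continuous_const).intervalIntegrable a b)
  have habs : |∫ x in a..b, (x - m) * f' x| ≤ (b-a)^2/4 * C := by
    calc |∫ x in a..b, (x - m) * f' x| ≤ ∫ x in a..b, |(x - m) * f' x| :=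
          intervalIntegral.abs_integral_le_integral_abs hab.le
      _ ≤ ∫ x in a..b, |x - m| * C := by
          apply intervalIntegral.integral_mono_on hab.le hint2.abs hintabsC
          intro x hx
          rw [abs_mul]
          exact mul_le_mul_of_nonneg_left (hbound x hx) (abs_nonneg _)
      _ = (∫ x in a..b, |x - m|) * C := by
          rw [← intervalIntegral.integral_mul_const]
      _ = (b-a)^2/4 * C := by
          congr 1
          have hm1 : a ≤ m := by rw [hm]; linarith
          have hm2 : m ≤ b := by rw [hm]; linarith
          have i1 : IntervalIntegrable (fun x : ℝ => |x - m|) volume a m :=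
            ((continuous_id.sub continuous_const).abs.intervalIntegrable a m)
          have i2 : IntervalIntegrable (fun x : ℝ => |x - m|) volume m b :=
            ((continuous_id.sub continuous_const).abs.intervalIntegrable m b)
          rw [← intervalIntegral.integral_add_adjacent_intervals i1 i2]
          have e1 : ∫ x in a..m, |x - m| = ∫ x in a..m, (m - x) := by
            apply intervalIntegral.integral_congr
            intro x hx
            rw [Set.uIcc_of_le hm1] at hx
            have hx2 : x - m ≤ 0 := by linarith [hx.2]
            show |x - m| = m - x
            rw [abs_of_nonpos hx2]
            ring
          have e2 : ∫ x in m..b, |x - m| = ∫ x in m..b, (x - m) := by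
            apply intervalIntegral.integral_congr
            intro x hx
            rw [Set.uIcc_of_le hm2] at hx
            have hx1 : (0:ℝ) ≤ x - m := by linarith [hx.1]
            show |x - m| = x - m
            rw [abs_of_nonneg hx1]
          rw [e1, e2,
            intervalIntegral.integral_sub intervalIntegrable_const intervalIntegrable_id,
            intervalIntegral.integral_sub intervalIntegrable_id intervalIntegrable_const,
            integral_id, integral_id]
          simp only [intervalIntegral.integral_const, smul_eq_mul]
          rw [hm]
          ring
  -- (p+1)^(1/p) ≤ 2
  have hple : (p+1)^(1/p) ≤ 2 := by
    have h1 : p + 1 ≤ (2:ℝ) ^ p := by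
      have := one_add_mul_self_le_rpow_one_add (by norm_num : (-1:ℝ) ≤ 1) hp.le
      norm_num at this
      linarith
    calc (p+1)^(1/p) ≤ ((2:ℝ)^p)^(1/p) :=
          Real.rpow_le_rpow (by linarith) h1 (by positivity)
      _ = 2 := by
          rw [← Real.rpow_mul (by norm_num), mul_one_div, div_self hp0.ne', Real.rpow_one]
  have h2pos : (0:ℝ) < (p+1)^(1/p) := Real.rpow_pos_of_pos (by linarith) _
  rw [hEq, abs_mul, abs_of_nonneg (by positivity : (0:ℝ) ≤ 1/(b-a))]
  calc (1/(b-a)) * |∫ x in a..b, (x - m) * f' x|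
      ≤ (1/(b-a)) * ((b-a)^2/4 * C) :=
        mul_le_mul_of_nonneg_left habs (by positivity)
    _ = (b-a)/4 * C := by field_simp
    _ ≤ (b-a)/(2*(p+1)^(1/p)) * C := by
        apply mul_le_mul_of_nonneg_right _ hC0
        rw [div_le_div_iff₀ (by norm_num) (by nlinarith [h2pos])]
        nlinarith [hple, hba, h2pos]
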